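/- Let λ ∈ ℝ with |λ| > 1, let A = diag(λ, 1/λ), and let M = [[a, b],[c, −a]] be a real traceless 2×2 matrix with b > 0 and c > 0. Then γ(t) = e^{Mt} A e^{−Mt}, t ∈ ℝ, is a positive path in Sp(2); moreover each γ(t) is conjugate to A by the symplectic matrix e^{Mt}, so γ stays in the symplectic conjugacy class of A. -/

import Mathlib

open Matrix Set Real

namespace Stmt7Aux

open NormedSpace

noncomputable section

section linfty
attribute [local instance] Matrix.linftyOpNormedAddCommGroup Matrix.linftyOpNormedSpace
  Matrix.linftyOpNormedRing Matrix.linftyOpNormedAlgebra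

/-- entry evaluation as a continuous linear map (w.r.t. the `L∞` operator norm) -/
def entryCLM (i j : Fin 2) : Matrix (Fin 2) (Fin 2) ℝ →L[ℝ] ℝ :=
  LinearMap.toContinuousLinearMap
    { toFun := fun X => X i j
      map_add' := fun _ _ => rfl
      map_smul' := fun _ _ => rfl }

theorem exp_comm (M : Matrix (Fin 2) (Fin 2) ℝ) (t : ℝ) :
    exp (t • M) * M = M * exp (t • M) :=
  (hasDerivAt_exp_smul_const (𝕂 := ℝ) M t).unique (hasDerivAt_exp_smul_const' (𝕂 := ℝ) M t)

theorem entry_deriv (M A : Matrix (Fin 2) (Fin 2) ℝ) (t : ℝ) (i j : Fin 2) :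
    HasDerivAt (fun u : ℝ => (exp (u • M) * A * exp ((-u) • M)) i j)
      ((M * (exp (t • M) * A * exp ((-t) • M))
        - (exp (t • M) * A * exp ((-t) • M)) * M) i j) t := by
  have h1 := (hasDerivAt_exp_smul_const (𝕂 := ℝ) M t).mul_const A
  have h2 := hasDerivAt_exp_smul_const (𝕂 := ℝ) (-M) t
  simp only [smul_neg, ← neg_smul] at h2
  have h3 := h1.mul h2
  have heq : exp (t • M) * M * A * exp ((-t) • M)
      + exp (t • M) * A * (exp ((-t) • M) * (-M))
      = M * (exp (t • M) * A * exp ((-t) • M))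
        - (exp (t • M) * A * exp ((-t) • M)) * M := by
    rw [exp_comm M t]
    noncomm_ring
  have h4 := (entryCLM i j).hasFDerivAt.comp_hasDerivAt t h3
  exact h4.congr_deriv (congrFun (congrFun heq i) j)

end linfty

end

end Stmt7Aux

attribute [local instance] Matrix.normedAddCommGroup Matrix.normedSpace

/-- The standard complex structure on `ℝ²`. -/
def J2 : Matrix (Fin 2) (Fin 2) ℝ := !![0, -1; 1, 0]

/-- A positive path in `Sp(2)` on the parameter set `s`. -/
def IsPosPath2 (s : Set ℝ) (A : ℝ → Matrix (Fin 2) (Fin 2) ℝ) : Prop :=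
  ∀ t ∈ s, (A t)ᵀ * J2 * A t = J2 ∧
    ∃ P : Matrix (Fin 2) (Fin 2) ℝ, P.IsSymm ∧ P.PosDef ∧
      HasDerivWithinAt A (J2 * P * A t) s t

namespace Stmt7Aux

open NormedSpace

theorem key_deriv (M A : Matrix (Fin 2) (Fin 2) ℝ) (t : ℝ) :
    HasDerivAt (fun u : ℝ => exp (u • M) * A * exp ((-u) • M))
      (M * (exp (t • M) * A * exp ((-t) • M))
        - (exp (t • M) * A * exp ((-t) • M)) * M) t :=
  hasDerivAt_pi.mpr fun i => hasDerivAt_pi.mpr fun j => entry_deriv M A t i j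

theorem J2_mul_J2 : J2 * J2 = -1 := by
  ext i j
  fin_cases i <;> fin_cases j <;>
    simp [J2, Matrix.mul_apply, Fin.sum_univ_two, Matrix.one_apply]

theorem J2_transpose : J2ᵀ = -J2 := by
  ext i j
  fin_cases i <;> fin_cases j <;> simp [J2]

theorem J2_mul_neg_J2 : J2 * -J2 = 1 := by rw [mul_neg, J2_mul_J2, neg_neg]

theorem neg_J2_mul_J2 : -J2 * J2 = 1 := by rw [neg_mul, J2_mul_J2, neg_neg]

theorem isUnit_J2 : IsUnit J2 := ⟨⟨J2, -J2, J2_mul_neg_J2, neg_J2_mul_J2⟩, rfl⟩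

theorem J2_inv : J2⁻¹ = -J2 := Matrix.inv_eq_right_inv J2_mul_neg_J2

theorem exp_mul_exp_neg (X : Matrix (Fin 2) (Fin 2) ℝ) : exp X * exp (-X) = 1 := by
  rw [← Matrix.exp_add_of_commute X (-X) (Commute.neg_right (Commute.refl X)),
    add_neg_cancel, NormedSpace.exp_zero]

theorem exp_neg_mul_exp (X : Matrix (Fin 2) (Fin 2) ℝ) : exp (-X) * exp X = 1 := by
  rw [← Matrix.exp_add_of_commute (-X) X (Commute.neg_left (Commute.refl X)),
    neg_add_cancel, NormedSpace.exp_zero]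

theorem exp_symp (X : Matrix (Fin 2) (Fin 2) ℝ) (hX : Xᵀ * J2 = -(J2 * X)) :
    (exp X)ᵀ * J2 * exp X = J2 := by
  have hXT : Xᵀ = J2 * (-X) * J2⁻¹ := by
    rw [J2_inv, mul_neg, mul_neg, neg_mul, neg_neg]
    calc Xᵀ = Xᵀ * (J2 * -J2) := by rw [J2_mul_neg_J2, mul_one]
      _ = Xᵀ * J2 * -J2 := by rw [mul_assoc]
      _ = -(J2 * X) * -J2 := by rw [hX]
      _ = J2 * X * J2 := by rw [neg_mul_neg]
  have h2 : (exp X)ᵀ = J2 * exp (-X) * J2⁻¹ := by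
    rw [← Matrix.exp_transpose, hXT, Matrix.exp_conj _ _ isUnit_J2]
  rw [h2, J2_inv]
  calc J2 * exp (-X) * -J2 * J2 * exp X
      = J2 * exp (-X) * (-J2 * J2) * exp X := by rw [mul_assoc (J2 * exp (-X))]
    _ = J2 * (exp (-X) * exp X) := by
        rw [neg_J2_mul_J2, mul_one, mul_assoc]
    _ = J2 := by rw [exp_neg_mul_exp, mul_one]

theorem posDef_conj {D S : Matrix (Fin 2) (Fin 2) ℝ} (hD : D.PosDef) (hS : IsUnit S) :
    (S * D * Sᵀ).PosDef := by
  have hDt : Dᵀ = D := by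
    have h := hD.1
    rwa [Matrix.IsHermitian, Matrix.conjTranspose_eq_transpose_of_trivial] at h
  rw [Matrix.posDef_iff_dotProduct_mulVec] at hD ⊢
  constructor
  · show (S * D * Sᵀ)ᴴ = _
    rw [Matrix.conjTranspose_eq_transpose_of_trivial]
    simp [Matrix.transpose_mul, Matrix.transpose_transpose, hDt, Matrix.mul_assoc]
  · intro x hx
    have hSt : IsUnit Sᵀ := by
      rw [Matrix.isUnit_iff_isUnit_det, Matrix.det_transpose, ← Matrix.isUnit_iff_isUnit_det]
      exact hS
    have hy : Sᵀ *ᵥ x ≠ 0 := fun h => hx <| by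
      have hinj := Matrix.mulVec_injective_iff_isUnit.mpr hSt
      exact hinj (show Sᵀ *ᵥ x = Sᵀ *ᵥ 0 by rw [h, Matrix.mulVec_zero])
    have hpos := hD.2 hy
    have hrw : star x ⬝ᵥ (S * D * Sᵀ) *ᵥ x = star (Sᵀ *ᵥ x) ⬝ᵥ D *ᵥ (Sᵀ *ᵥ x) := by
      simp only [star_trivial, ← Matrix.mulVec_mulVec, Matrix.dotProduct_mulVec (v := x) (A := S)]
      rw [← Matrix.mulVec_transpose]
    rw [hrw]
    exact hpos

end Stmt7Aux

open Stmt7Aux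

/-- For `A = diag(λ, 1/λ)` with `|λ| > 1` and `M = [[a,b],[c,-a]]` with `b, c > 0`, the
path `γ(t) = e^{Mt} A e^{-Mt}` is a positive path in `Sp(2)` staying in the symplectic
conjugacy class of `A`: each `e^{Mt}` is symplectic and `γ(t) = e^{Mt} A (e^{Mt})⁻¹`. -/
theorem stmt7 (lam a b c : ℝ) (hlam : 1 < |lam|) (hb : 0 < b) (hc : 0 < c)
    (A M : Matrix (Fin 2) (Fin 2) ℝ)
    (hA : A = !![lam, 0; 0, lam⁻¹]) (hM : M = !![a, b; c, -a]) :
    IsPosPath2 Set.univ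
      (fun t => NormedSpace.exp (t • M) * A * NormedSpace.exp ((-t) • M)) ∧
    ∀ t : ℝ,
      (NormedSpace.exp (t • M))ᵀ * J2 * NormedSpace.exp (t • M) = J2 ∧
      NormedSpace.exp (t • M) * A * NormedSpace.exp ((-t) • M) =
        NormedSpace.exp (t • M) * A * (NormedSpace.exp (t • M))⁻¹ := by
  have hl0 : lam ≠ 0 := by
    rintro rfl
    rw [abs_zero] at hlam
    norm_num at hlam
  have hlam2 : 1 < lam ^ 2 := by nlinarith [sq_abs lam, abs_nonneg lam]
  have hMJ : Mᵀ * J2 = -(J2 * M) := by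
    have ht : (!![a, b; c, -a])ᵀ = !![a, c; b, -a] := by
      ext i j; fin_cases i <;> fin_cases j <;> rfl
    rw [hM, ht]
    ext i j
    fin_cases i <;> fin_cases j <;>
      simp [J2, Matrix.mul_apply, Fin.sum_univ_two]
  have hsympX : ∀ s : ℝ, (s • M)ᵀ * J2 = -(J2 * (s • M)) := by
    intro s
    rw [Matrix.transpose_smul, smul_mul_assoc, hMJ, mul_smul_comm, smul_neg]
  have hEs : ∀ s : ℝ, (NormedSpace.exp (s • M))ᵀ * J2 * NormedSpace.exp (s • M) = J2 :=
    fun s => exp_symp _ (hsympX s)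
  have hAs : Aᵀ * J2 * A = J2 := by
    have ht : (!![lam, 0; 0, lam⁻¹])ᵀ = !![lam, 0; 0, lam⁻¹] := by
      ext i j; fin_cases i <;> fin_cases j <;> rfl
    rw [hA, ht]
    ext i j
    fin_cases i <;> fin_cases j <;>
      simp [J2, Matrix.mul_apply, Fin.sum_univ_two] <;> field_simp
  have hEE' : ∀ s : ℝ, NormedSpace.exp (s • M) * NormedSpace.exp ((-s) • M) = 1 := by
    intro s; rw [neg_smul]; exact exp_mul_exp_neg _
  have hE'E : ∀ s : ℝ, NormedSpace.exp ((-s) • M) * NormedSpace.exp (s • M) = 1 := by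
    intro s; rw [neg_smul]; exact exp_neg_mul_exp _
  have hd1 : 0 < b * (lam ^ 2 - 1) := by nlinarith
  have hd2 : 0 < c * (1 - lam⁻¹ ^ 2) := by
    have hmul : lam⁻¹ ^ 2 * lam ^ 2 = 1 := by field_simp
    nlinarith [sq_nonneg lam⁻¹]
  set D0 : Matrix (Fin 2) (Fin 2) ℝ :=
    !![b * (lam ^ 2 - 1), 0; 0, c * (1 - lam⁻¹ ^ 2)] with hD0
  have hD0t : D0ᵀ = D0 := by
    ext i j
    fin_cases i <;> fin_cases j <;> simp [hD0]
  have hD0pos : D0.PosDef := by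
    rw [Matrix.posDef_iff_dotProduct_mulVec]
    constructor
    · show D0ᴴ = D0
      rw [Matrix.conjTranspose_eq_transpose_of_trivial, hD0t]
    · intro x hx
      have hx' : x 0 ≠ 0 ∨ x 1 ≠ 0 := by
        by_contra h
        push_neg at h
        exact hx (funext fun i => by fin_cases i <;> simp [h.1, h.2])
      have hval : star x ⬝ᵥ D0 *ᵥ x
          = b * (lam ^ 2 - 1) * (x 0 * x 0) + c * (1 - lam⁻¹ ^ 2) * (x 1 * x 1) := by
        simp [hD0, dotProduct, Matrix.mulVec, Fin.sum_univ_two]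
        ring
      rw [hval]
      rcases hx' with h | h
      · nlinarith [mul_self_nonneg (x 0), mul_self_nonneg (x 1), mul_pos hd1 (mul_self_pos.mpr h)]
      · nlinarith [mul_self_nonneg (x 0), mul_self_nonneg (x 1), mul_pos hd2 (mul_self_pos.mpr h)]
  have h0 : D0 * (J2 * A) = M * A - A * M := by
    rw [hA, hM]
    ext i j
    fin_cases i <;> fin_cases j <;>
      simp [hD0, J2, Matrix.mul_apply, Fin.sum_univ_two, Matrix.sub_apply]
    all_goals try field_simp
    all_goals ring
  constructor
  · intro t _
    dsimp only
    set E := NormedSpace.exp (t • M) with hE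
    set E' := NormedSpace.exp ((-t) • M) with hE'
    have hEsymp : Eᵀ * J2 * E = J2 := hEs t
    have hE'symp : E'ᵀ * J2 * E' = J2 := hEs (-t)
    have h5 : E' * E = 1 := hE'E t
    have h6 : E * E' = 1 := hEE' t
    have hME : M * E = E * M := (exp_comm M t).symm
    have hME' : M * E' = E' * M := (exp_comm M (-t)).symm
    have pE : ∀ X, Eᵀ * (J2 * (E * X)) = J2 * X := fun X => by
      calc Eᵀ * (J2 * (E * X)) = Eᵀ * J2 * E * X := by simp only [Matrix.mul_assoc]
        _ = J2 * X := by rw [hEsymp]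
    have pA : ∀ X, Aᵀ * (J2 * (A * X)) = J2 * X := fun X => by
      calc Aᵀ * (J2 * (A * X)) = Aᵀ * J2 * A * X := by simp only [Matrix.mul_assoc]
        _ = J2 * X := by rw [hAs]
    have hγs : (E * A * E')ᵀ * J2 * (E * A * E') = J2 := by
      calc (E * A * E')ᵀ * J2 * (E * A * E')
          = E'ᵀ * (Aᵀ * (Eᵀ * (J2 * (E * (A * E'))))) := by
            simp only [Matrix.transpose_mul, Matrix.mul_assoc]
        _ = E'ᵀ * (Aᵀ * (J2 * (A * E'))) := by rw [pE]
        _ = E'ᵀ * (J2 * E') := by rw [pA]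
        _ = J2 := by rw [← Matrix.mul_assoc]; exact hE'symp
    have hEJ : Eᵀ * J2 = J2 * E' := by
      calc Eᵀ * J2 = Eᵀ * J2 * (E * E') := by rw [h6, mul_one]
        _ = Eᵀ * J2 * E * E' := by simp only [Matrix.mul_assoc]
        _ = J2 * E' := by rw [hEsymp]
    refine ⟨hγs, J2 * E * D0 * (J2 * E)ᵀ, ?_, ?_, ?_⟩
    · show (J2 * E * D0 * (J2 * E)ᵀ)ᵀ = J2 * E * D0 * (J2 * E)ᵀ
      calc (J2 * E * D0 * (J2 * E)ᵀ)ᵀ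
          = (J2 * E)ᵀᵀ * (J2 * E * D0)ᵀ := Matrix.transpose_mul _ _
        _ = J2 * E * (D0ᵀ * (J2 * E)ᵀ) := by
            rw [Matrix.transpose_transpose, Matrix.transpose_mul]
        _ = J2 * E * D0 * (J2 * E)ᵀ := by rw [hD0t, ← Matrix.mul_assoc]
    · exact posDef_conj hD0pos (isUnit_J2.mul (Matrix.isUnit_exp (t • M)))
    · have hkey : J2 * (J2 * E * D0 * (J2 * E)ᵀ) * (E * A * E')
          = M * (E * A * E') - E * A * E' * M := by
        have h1 : (J2 * E)ᵀ = -(J2 * E') := by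
          rw [Matrix.transpose_mul, J2_transpose, mul_neg, hEJ]
        rw [h1]
        simp only [mul_neg, neg_mul, ← Matrix.mul_assoc]
        rw [J2_mul_J2]
        simp only [neg_mul, neg_neg, neg_one_mul, one_mul]
        rw [Matrix.mul_assoc (E * D0 * J2) E' E, h5, mul_one]
        rw [Matrix.mul_assoc (E * D0) J2 A, Matrix.mul_assoc E D0 (J2 * A), h0]
        rw [Matrix.mul_sub, Matrix.sub_mul]
        rw [← Matrix.mul_assoc E M A, ← hME]
        rw [← Matrix.mul_assoc E A M, Matrix.mul_assoc (E * A) M E', hME',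
          ← Matrix.mul_assoc]
      rw [hkey]
      exact (key_deriv M A t).hasDerivWithinAt
  · intro t
    refine ⟨hEs t, ?_⟩
    rw [neg_smul, Matrix.exp_neg]
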